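/- Let T_R = (Z/RZ)² be the discrete two-dimensional torus. There exist α₀ > 0 and a function R₀ : (0, α₀) → ℕ with the following property. Let μ be a probability measure on {0,1}^{T_R} invariant under all translations of T_R, let 0 < α < α₀, and let K ≥ 1 be such that for every k ≥ K and all pairwise distinct sites t₁,…,t_k ∈ T_R one has μ( ξ_{t₁} = ξ_{t₂} = … = ξ_{t_k} = 1 ) ≤ α^k. Then for every R ≥ √(K/(3α)) + R₀(α) and every t ∈ T_R, μ( ξ_t = 1 ) ≤ 3α. -/

import Mathlib

/-!
STATEMENT 18: There exist `α₀ > 0` and `R₀ : (0,α₀) → ℕ` such that: if `μ` is a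
translation-invariant probability measure on `{0,1}^{T_R}`, `0 < α < α₀`, `K ≥ 1`,
and for all `k ≥ K` and all pairwise distinct sites `t₁,…,t_k`
(equivalently: every `k`-element set `T` of sites) one has
`μ(ξ ≡ 1 on T) ≤ α^k`, then for `R ≥ √(K/(3α)) + R₀(α)` and every site `t`,
`μ(ξ_t = 1) ≤ 3α`.

Configurations are functions `(ZMod R × ZMod R) → Bool` (`true` = 1) and the
measure is given by its weight function.
-/

open scoped BigOperators

open scoped BigOperators
open Finset

/-- `K^K ≤ 3^K · K!` (since `e < 3`). -/
lemma pow_self_le_three_pow_mul_factorial (K : ℕ) :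
    (K : ℝ) ^ K ≤ 3 ^ K * (K.factorial : ℝ) := by
  have hfac : (0:ℝ) < (K.factorial : ℝ) := by exact_mod_cast K.factorial_pos
  have h1 : (K : ℝ) ^ K / (K.factorial : ℝ) ≤ Real.exp K := by
    have := Real.sum_le_exp_of_nonneg (x := (K:ℝ)) (by positivity) (K + 1)
    refine le_trans ?_ this
    have : (K:ℝ)^K / (K.factorial : ℝ) = ∑ i ∈ {K}, (K:ℝ)^i / (i.factorial : ℝ) := by simp
    rw [this]
    apply Finset.sum_le_sum_of_subset_of_nonneg
    · intro i hi; simp at hi; simp [hi, Nat.lt_succ_self]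
    · intro i _ _; positivity
  have h2 : Real.exp (K : ℝ) ≤ 3 ^ K := by
    rw [show ((K:ℝ)) = (K:ℝ) * 1 by ring, Real.exp_nat_mul]
    exact pow_le_pow_left₀ (Real.exp_pos 1).le
      (le_trans Real.exp_one_lt_d9.le (by norm_num)) K
  calc (K:ℝ)^K = ((K:ℝ)^K / (K.factorial:ℝ)) * (K.factorial:ℝ) := by field_simp
    _ ≤ Real.exp K * (K.factorial:ℝ) := by
        exact mul_le_mul_of_nonneg_right h1 hfac.le
    _ ≤ 3^K * (K.factorial:ℝ) := mul_le_mul_of_nonneg_right h2 hfac.le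

noncomputable def ffK (K : ℕ) : ℝ → ℝ := fun x => ∏ i ∈ range K, max (x - i) 0

lemma ffK_nonneg (K : ℕ) (x : ℝ) : 0 ≤ ffK K x :=
  Finset.prod_nonneg fun i _ => le_max_right _ _

lemma ffK_mono (K : ℕ) : Monotone (ffK K) := by
  induction K with
  | zero =>
    show Monotone (fun x : ℝ => ∏ i ∈ range 0, max (x - i) 0)
    simp only [Finset.prod_range_zero]; exact monotone_const
  | succ K ih =>
    have : ffK (K+1) = fun x => ffK K x * max (x - K) 0 := by
      funext x; simp [ffK, Finset.prod_range_succ]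
    rw [this]
    have hg : Monotone (fun x : ℝ => max (x - (K:ℝ)) 0) :=
      fun a b h => max_le_max (by linarith) le_rfl
    exact ih.mul hg (fun x => ffK_nonneg K x) (fun x => le_max_right _ _)

lemma ffK_convex (K : ℕ) : ConvexOn ℝ Set.univ (ffK K) := by
  induction K with
  | zero =>
    show ConvexOn ℝ Set.univ (fun x : ℝ => ∏ i ∈ range 0, max (x - i) 0)
    simp only [Finset.prod_range_zero]; exact convexOn_const 1 convex_univ
  | succ K ih =>
    have hg : ConvexOn ℝ Set.univ (fun x : ℝ => max (x - K) 0) := by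
      have h1 : ConvexOn ℝ Set.univ (fun x : ℝ => x - K) :=
        (convexOn_id convex_univ).sub (concaveOn_const _ convex_univ)
      exact h1.sup (convexOn_const 0 convex_univ)
    have heq : ffK (K+1) = (fun x => ffK K x) * (fun x : ℝ => max (x - K) 0) := by
      funext x; simp [ffK, Finset.prod_range_succ]
    rw [heq]
    refine ih.mul hg (fun x _ => ffK_nonneg K x) (fun x _ => le_max_right _ _) ?_
    intro a _ b _ hab
    have hle : a ≤ b := by
      by_contra h
      have : max (b - (K:ℝ)) 0 ≤ max (a - (K:ℝ)) 0 :=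
        max_le_max (by linarith [le_of_not_ge h]) le_rfl
      exact absurd hab (not_lt.mpr this)
    exact ffK_mono K hle

lemma ffK_descFactorial (K n : ℕ) : ffK K n = (n.descFactorial K : ℝ) := by
  induction K with
  | zero => simp [ffK]
  | succ K ih =>
    rw [show ffK (K+1) n = ffK K n * max ((n:ℝ) - K) 0 by
      simp [ffK, Finset.prod_range_succ], ih, Nat.descFactorial_succ]
    rcases le_total K n with h | h
    · rw [max_eq_left (by simp [h] : (0:ℝ) ≤ (n:ℝ) - K)]
      push_cast [h]; ring
    · rw [max_eq_right (by simp [h] : (n:ℝ) - K ≤ 0)]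
      rw [Nat.sub_eq_zero_of_le h]; push_cast; ring

set_option maxHeartbeats 1600000 in
theorem peierls_implies_small_density :
    ∃ α₀ : ℝ, 0 < α₀ ∧ ∃ R₀ : ℝ → ℕ,
      ∀ α : ℝ, 0 < α → α < α₀ →
      ∀ K : ℕ, 1 ≤ K →
      ∀ (R : ℕ) (_ : NeZero R)
        (μ : ((ZMod R × ZMod R) → Bool) → ℝ),
        (∀ ξ, 0 ≤ μ ξ) →
        (∑ ξ : (ZMod R × ZMod R) → Bool, μ ξ) = 1 →
        (∀ (v : ZMod R × ZMod R) (ξ : (ZMod R × ZMod R) → Bool),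
          μ (fun t => ξ (t + v)) = μ ξ) →
        (∀ k : ℕ, K ≤ k → ∀ T : Finset (ZMod R × ZMod R), T.card = k →
          (∑ ξ ∈ Finset.univ.filter
              (fun ξ : (ZMod R × ZMod R) → Bool => ∀ t ∈ T, ξ t = true), μ ξ)
            ≤ α ^ k) →
        Real.sqrt ((K : ℝ) / (3 * α)) + (R₀ α : ℝ) ≤ (R : ℝ) →
        ∀ t : ZMod R × ZMod R,
          (∑ ξ ∈ Finset.univ.filter
              (fun ξ : (ZMod R × ZMod R) → Bool => ξ t = true), μ ξ) ≤ 3 * α := by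
  classical
  refine ⟨1, one_pos, fun _ => 0, ?_⟩
  intro α hα hα1 K hK R hR μ hμ0 hμ1 hinv hcorr hRge t
  haveI := hR
  set n := Fintype.card (ZMod R × ZMod R) with hndef
  set N : ((ZMod R × ZMod R) → Bool) → ℕ :=
    fun ξ => (Finset.univ.filter (fun u => ξ u = true)).card with hNdef
  -- translation invariance of one-point marginals
  have hshift : ∀ s v : ZMod R × ZMod R,
      (∑ ξ ∈ Finset.univ.filter
        (fun ξ : (ZMod R × ZMod R) → Bool => ξ (s + v) = true), μ ξ)
      = ∑ ξ ∈ Finset.univ.filter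
        (fun ξ : (ZMod R × ZMod R) → Bool => ξ s = true), μ ξ := by
    intro s v
    have hbij : Function.Bijective
        (fun (ξ : (ZMod R × ZMod R) → Bool) => (fun u => ξ (u + v) :
          (ZMod R × ZMod R) → Bool)) := by
      constructor
      · intro ξ η h
        funext u
        have := congrFun h (u - v)
        simpa [sub_add_cancel] using this
      · intro ξ
        refine ⟨fun u => ξ (u - v), ?_⟩
        funext u
        simp [add_sub_cancel_right]
    rw [Finset.sum_filter, Finset.sum_filter]
    exact Fintype.sum_bijective _ hbij _ _ (fun ξ => by
      simp only
      rw [hinv v ξ])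
  have hpt : ∀ s : ZMod R × ZMod R,
      (∑ ξ ∈ Finset.univ.filter
        (fun ξ : (ZMod R × ZMod R) → Bool => ξ s = true), μ ξ)
      = ∑ ξ ∈ Finset.univ.filter
        (fun ξ : (ZMod R × ZMod R) → Bool => ξ t = true), μ ξ := by
    intro s
    have h := hshift s (t - s)
    rw [show s + (t - s) = t by ring] at h
    exact h.symm
  -- expected number of occupied sites
  have hNcast : ∀ ξ : (ZMod R × ZMod R) → Bool,
      (N ξ : ℝ) = ∑ u : ZMod R × ZMod R, (if ξ u = true then (1:ℝ) else 0) := by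
    intro ξ
    rw [hNdef]
    simp only
    rw [Finset.card_filter]
    push_cast
    rfl
  have hsum_p : (∑ ξ : (ZMod R × ZMod R) → Bool, μ ξ * (N ξ : ℝ))
      = (n : ℝ) * ∑ ξ ∈ Finset.univ.filter
          (fun ξ : (ZMod R × ZMod R) → Bool => ξ t = true), μ ξ := by
    calc (∑ ξ : (ZMod R × ZMod R) → Bool, μ ξ * (N ξ : ℝ))
        = ∑ ξ : (ZMod R × ZMod R) → Bool, ∑ u : ZMod R × ZMod R,
            (if ξ u = true then μ ξ else 0) := by
          refine Finset.sum_congr rfl fun ξ _ => ?_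
          rw [hNcast, Finset.mul_sum]
          exact Finset.sum_congr rfl fun u _ => by rw [mul_ite, mul_one, mul_zero]
      _ = ∑ u : ZMod R × ZMod R, ∑ ξ : (ZMod R × ZMod R) → Bool,
            (if ξ u = true then μ ξ else 0) := Finset.sum_comm
      _ = ∑ u : ZMod R × ZMod R, ∑ ξ ∈ Finset.univ.filter
            (fun ξ : (ZMod R × ZMod R) → Bool => ξ u = true), μ ξ := by
          exact Finset.sum_congr rfl fun u _ => (Finset.sum_filter _ _).symm
      _ = ∑ _u : ZMod R × ZMod R, ∑ ξ ∈ Finset.univ.filter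
            (fun ξ : (ZMod R × ZMod R) → Bool => ξ t = true), μ ξ :=
          Finset.sum_congr rfl fun u _ => hpt u
      _ = (n : ℝ) * _ := by
          rw [Finset.sum_const, Finset.card_univ, nsmul_eq_mul, hndef]
  -- correlation identity
  have hcorr_id : (∑ T ∈ Finset.powersetCard K (Finset.univ : Finset (ZMod R × ZMod R)),
        ∑ ξ ∈ Finset.univ.filter
          (fun ξ : (ZMod R × ZMod R) → Bool => ∀ u ∈ T, ξ u = true), μ ξ)
      = ∑ ξ : (ZMod R × ZMod R) → Bool, μ ξ * ((N ξ).choose K : ℝ) := by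
    calc (∑ T ∈ Finset.powersetCard K (Finset.univ : Finset (ZMod R × ZMod R)),
          ∑ ξ ∈ Finset.univ.filter
            (fun ξ : (ZMod R × ZMod R) → Bool => ∀ u ∈ T, ξ u = true), μ ξ)
        = ∑ T ∈ Finset.powersetCard K (Finset.univ : Finset (ZMod R × ZMod R)),
            ∑ ξ : (ZMod R × ZMod R) → Bool,
              (if (∀ u ∈ T, ξ u = true) then μ ξ else 0) :=
          Finset.sum_congr rfl fun T _ => Finset.sum_filter _ _
      _ = ∑ ξ : (ZMod R × ZMod R) → Bool,
            ∑ T ∈ Finset.powersetCard K (Finset.univ : Finset (ZMod R × ZMod R)),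
              (if (∀ u ∈ T, ξ u = true) then μ ξ else 0) := Finset.sum_comm
      _ = ∑ ξ : (ZMod R × ZMod R) → Bool, μ ξ * ((N ξ).choose K : ℝ) := by
          refine Finset.sum_congr rfl fun ξ _ => ?_
          rw [← Finset.sum_filter]
          have hfil : (Finset.powersetCard K
                (Finset.univ : Finset (ZMod R × ZMod R))).filter
                (fun T => ∀ u ∈ T, ξ u = true)
              = Finset.powersetCard K
                (Finset.univ.filter (fun u => ξ u = true)) := by
            ext U
            simp only [Finset.mem_filter, Finset.mem_powersetCard]
            constructor
            · rintro ⟨⟨-, hcard⟩, hall⟩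
              refine ⟨fun u hu => Finset.mem_filter.mpr
                ⟨Finset.mem_univ u, hall u hu⟩, hcard⟩
            · rintro ⟨hsub, hcard⟩
              exact ⟨⟨Finset.subset_univ U, hcard⟩,
                fun u hu => (Finset.mem_filter.mp (hsub hu)).2⟩
          rw [hfil, Finset.sum_const, Finset.card_powersetCard, nsmul_eq_mul,
            mul_comm]
  -- upper bound on correlation sum
  have hle1 : (∑ T ∈ Finset.powersetCard K
        (Finset.univ : Finset (ZMod R × ZMod R)),
        ∑ ξ ∈ Finset.univ.filter
          (fun ξ : (ZMod R × ZMod R) → Bool => ∀ u ∈ T, ξ u = true), μ ξ)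
      ≤ (n.choose K : ℝ) * α ^ K := by
    have h := Finset.sum_le_card_nsmul
      (Finset.powersetCard K (Finset.univ : Finset (ZMod R × ZMod R)))
      _ (α ^ K)
      (fun T hT => hcorr K le_rfl T (Finset.mem_powersetCard.mp hT).2)
    rw [Finset.card_powersetCard, Finset.card_univ, nsmul_eq_mul] at h
    exact_mod_cast h
  -- Jensen
  have hjen := (ffK_convex K).map_sum_le (t := Finset.univ) (w := μ)
    (p := fun ξ : (ZMod R × ZMod R) → Bool => (N ξ : ℝ))
    (fun ξ _ => hμ0 ξ) hμ1 (fun ξ _ => Set.mem_univ _)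
  simp only [smul_eq_mul] at hjen
  have hrhs : (∑ ξ : (ZMod R × ZMod R) → Bool, μ ξ * ffK K ((N ξ : ℝ)))
      = (K.factorial : ℝ) * ∑ ξ : (ZMod R × ZMod R) → Bool,
          μ ξ * ((N ξ).choose K : ℝ) := by
    rw [Finset.mul_sum]
    refine Finset.sum_congr rfl fun ξ _ => ?_
    rw [ffK_descFactorial, Nat.descFactorial_eq_factorial_mul_choose]
    push_cast
    ring
  have hupper : ffK K ((n : ℝ) * ∑ ξ ∈ Finset.univ.filter
        (fun ξ : (ZMod R × ZMod R) → Bool => ξ t = true), μ ξ)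
      ≤ (n : ℝ) ^ K * α ^ K := by
    rw [← hsum_p]
    refine hjen.trans ?_
    rw [hrhs, ← hcorr_id]
    calc (K.factorial : ℝ) * ∑ T ∈ Finset.powersetCard K
          (Finset.univ : Finset (ZMod R × ZMod R)),
          ∑ ξ ∈ Finset.univ.filter
            (fun ξ : (ZMod R × ZMod R) → Bool => ∀ u ∈ T, ξ u = true), μ ξ
        ≤ (K.factorial : ℝ) * ((n.choose K : ℝ) * α ^ K) :=
          mul_le_mul_of_nonneg_left hle1 (Nat.cast_nonneg _)
      _ = ((n.descFactorial K : ℕ) : ℝ) * α ^ K := by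
          rw [Nat.descFactorial_eq_factorial_mul_choose]
          push_cast
          ring
      _ ≤ ((n ^ K : ℕ) : ℝ) * α ^ K := by
          refine mul_le_mul_of_nonneg_right ?_ (by positivity)
          exact_mod_cast n.descFactorial_le_pow K
      _ = (n : ℝ) ^ K * α ^ K := by push_cast; ring
  -- now the contradiction argument
  by_contra hcon
  push_neg at hcon
  have hn1 : 0 < n := Fintype.card_pos
  have hn0 : (0 : ℝ) < n := by exact_mod_cast hn1
  have hK0 : (0 : ℝ) < K := by exact_mod_cast hK
  have hnR : (n : ℝ) = (R : ℝ) * R := by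
    rw [hndef, Fintype.card_prod, ZMod.card]
    push_cast
    ring
  have hsqrtR : Real.sqrt ((K : ℝ) / (3 * α)) ≤ (R : ℝ) := by
    simpa using hRge
  have hsq : (K : ℝ) / (3 * α) ≤ (R : ℝ) * R := by
    nlinarith [Real.sq_sqrt (show (0:ℝ) ≤ (K : ℝ) / (3 * α) by positivity),
      Real.sqrt_nonneg ((K : ℝ) / (3 * α))]
  have hKn : (K : ℝ) ≤ 3 * α * n := by
    rw [div_le_iff₀ (by positivity)] at hsq
    rw [hnR]
    linarith
  set S : ℝ := ∑ ξ ∈ Finset.univ.filter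
    (fun ξ : (ZMod R × ZMod R) → Bool => ξ t = true), μ ξ with hSdef
  have hENgt : 3 * α * (n : ℝ) < (n : ℝ) * S := by
    have := mul_lt_mul_of_pos_left hcon hn0
    linarith [this]
  have hlow : (∏ i ∈ Finset.range K, ((3 * α * (n:ℝ) / K) * ((K : ℝ) - i)))
      < ffK K ((n : ℝ) * S) := by
    have hff : ffK K ((n : ℝ) * S) = ∏ i ∈ Finset.range K, ((n : ℝ) * S - i) := by
      unfold ffK
      refine Finset.prod_congr rfl fun i hi => max_eq_left ?_
      have hi' : (i : ℝ) < K := by exact_mod_cast Finset.mem_range.mp hi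
      linarith
    rw [hff]
    refine Finset.prod_lt_prod_of_nonempty ?_ ?_ ?_
    · intro i hi
      have hi' : (i : ℝ) < K := by exact_mod_cast Finset.mem_range.mp hi
      exact mul_pos (by positivity) (by linarith)
    · intro i hi
      have hi' : (i : ℝ) < K := by exact_mod_cast Finset.mem_range.mp hi
      have hi0 : (0 : ℝ) ≤ i := Nat.cast_nonneg i
      rw [div_mul_eq_mul_div, div_lt_iff₀ hK0]
      nlinarith [hENgt, hKn]
    · exact Finset.nonempty_range_iff.mpr (by omega)
  have hprod : (∏ i ∈ Finset.range K, ((3 * α * (n:ℝ) / K) * ((K : ℝ) - i)))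
      = (3 * α * (n:ℝ) / K) ^ K * (K.factorial : ℝ) := by
    rw [Finset.prod_mul_distrib, Finset.prod_const, Finset.card_range]
    congr 1
    have hc : ∀ i ∈ Finset.range K, (K : ℝ) - i = ((K - i : ℕ) : ℝ) := by
      intro i hi
      rw [Nat.cast_sub (le_of_lt (Finset.mem_range.mp hi))]
    rw [Finset.prod_congr rfl hc, ← Nat.cast_prod]
    congr 1
    have h := Finset.prod_range_reflect (fun j => j + 1) K
    rw [Finset.prod_range_add_one_eq_factorial] at h
    rw [← h]
    refine Finset.prod_congr rfl fun i hi => ?_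
    have := Finset.mem_range.mp hi
    omega
  have hfin : (3 * α * (n:ℝ) / K) ^ K * (K.factorial : ℝ)
      < (n : ℝ) ^ K * α ^ K := by
    rw [← hprod]
    exact lt_of_lt_of_le hlow hupper
  have hA0 : (0 : ℝ) < α * n := mul_pos hα hn0
  have key := pow_self_le_three_pow_mul_factorial K
  have e1 : (3 * α * (n:ℝ) / K) ^ K * (K.factorial : ℝ)
      = 3 ^ K * (α * n) ^ K * (K.factorial : ℝ) / (K : ℝ) ^ K := by
    rw [div_pow, mul_pow, mul_pow]
    ring
  have e2 : (n : ℝ) ^ K * α ^ K = (α * n) ^ K := by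
    rw [mul_pow]; ring
  rw [e1, e2, div_lt_iff₀ (by positivity)] at hfin
  have h3 : (α * n) ^ K * (K : ℝ) ^ K
      ≤ (α * n) ^ K * (3 ^ K * (K.factorial : ℝ)) :=
    mul_le_mul_of_nonneg_left key (le_of_lt (pow_pos hA0 K))
  nlinarith [hfin, h3]
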